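/- Let Ω be a set, X a nonempty compact metric space, I a countable index set, θ_i : Ω → Ω arbitrary maps, p_i : Ω → [0,∞) weight functions with ∑_{i∈I} p_i(ω) = 1 for every ω ∈ Ω, and suppose that for some λ with 0 ≤ λ < 1 every fibre map g_ω : X → X (ω ∈ Ω) is Lipschitz with constant λ. Let K be the associated sectional transfer operator. Then for all sections μ, ν : Ω → M₁(X) and every D ≥ 0: if W₁(ν_θ, μ_θ) ≤ D for every θ ∈ Ω, then W₁((Kν)_ω, (Kμ)_ω) ≤ λ·D for every ω ∈ Ω. In particular, K is a λ-contraction for the supremum Wasserstein-1 metric on sections. -/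

import Mathlib

open MeasureTheory

/-- The Wasserstein-1 distance between two Borel (probability) measures on a metric
space `X`, defined via Kantorovich–Rubinstein duality. -/
noncomputable def W1 {X : Type*} [MetricSpace X] [MeasurableSpace X]
    (μ ν : Measure X) : ℝ :=
  ⨆ φ : {φ : X → ℝ // LipschitzWith 1 φ}, (∫ x, φ.1 x ∂μ) - ∫ x, φ.1 x ∂ν

/-- The sectional transfer operator (full-branch form) applied to a section
`ν : Ω → M₁(X)`: `(Kν)_ω = ∑_{i∈I} p_i(ω) · (g_{θ_i(ω)})_* ν_{θ_i(ω)}`. -/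
noncomputable def sectionalTransfer {Ω X I : Type*} [MeasurableSpace X]
    (θ : I → Ω → Ω) (p : I → Ω → ℝ) (g : Ω → X → X)
    (ν : Ω → Measure X) (ω : Ω) : Measure X :=
  Measure.sum fun i => ENNReal.ofReal (p i ω) • ((ν (θ i ω)).map (g (θ i ω)))

section Aux

variable {X : Type*} [MetricSpace X] [CompactSpace X] [Nonempty X]
    [MeasurableSpace X] [BorelSpace X]

lemma aux_integrable (ρ : Measure X) [IsFiniteMeasure ρ] {φ : X → ℝ}
    (hφ : Continuous φ) : Integrable φ ρ :=
  hφ.integrable_of_hasCompactSupport (IsClosed.isCompact (isClosed_tsupport _))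

lemma aux_diff_le (ρ σ : Measure X) [IsProbabilityMeasure ρ] [IsProbabilityMeasure σ]
    {φ : X → ℝ} (hφ : LipschitzWith 1 φ) :
    (∫ x, φ x ∂ρ) - ∫ x, φ x ∂σ ≤ 2 * Metric.diam (Set.univ : Set X) := by
  obtain ⟨x0⟩ := ‹Nonempty X›
  have hbd : ∀ x : X, ‖φ x - φ x0‖ ≤ Metric.diam (Set.univ : Set X) := by
    intro x
    calc ‖φ x - φ x0‖ = dist (φ x) (φ x0) := by rw [Real.dist_eq, Real.norm_eq_abs]
      _ ≤ 1 * dist x x0 := hφ.dist_le_mul x x0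
      _ ≤ Metric.diam (Set.univ : Set X) := by
          rw [one_mul]
          exact Metric.dist_le_diam_of_mem isCompact_univ.isBounded trivial trivial
  have hint : ∀ (τ : Measure X) [IsProbabilityMeasure τ],
      |∫ x, (φ x - φ x0) ∂τ| ≤ Metric.diam (Set.univ : Set X) := by
    intro τ _
    have := norm_integral_le_of_norm_le_const (μ := τ)
      (f := fun x => φ x - φ x0) (C := Metric.diam (Set.univ : Set X))
      (Filter.Eventually.of_forall hbd)
    simpa [Real.norm_eq_abs] using this
  have hρ : ∫ x, (φ x - φ x0) ∂ρ = (∫ x, φ x ∂ρ) - φ x0 := by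
    rw [integral_sub (aux_integrable ρ hφ.continuous) (integrable_const _)]
    simp
  have hσ : ∫ x, (φ x - φ x0) ∂σ = (∫ x, φ x ∂σ) - φ x0 := by
    rw [integral_sub (aux_integrable σ hφ.continuous) (integrable_const _)]
    simp
  have h1 := (abs_le.mp (hint ρ)).2
  have h2 := (abs_le.mp (hint σ)).1
  rw [hρ] at h1
  rw [hσ] at h2
  linarith

lemma aux_bddAbove (ρ σ : Measure X) [IsProbabilityMeasure ρ] [IsProbabilityMeasure σ] :
    BddAbove (Set.range fun φ : {φ : X → ℝ // LipschitzWith 1 φ} =>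
      (∫ x, φ.1 x ∂ρ) - ∫ x, φ.1 x ∂σ) := by
  refine ⟨2 * Metric.diam (Set.univ : Set X), ?_⟩
  rintro r ⟨φ, rfl⟩
  exact aux_diff_le ρ σ φ.2

lemma aux_le_W1 (ρ σ : Measure X) [IsProbabilityMeasure ρ] [IsProbabilityMeasure σ]
    {φ : X → ℝ} (hφ : LipschitzWith 1 φ) :
    (∫ x, φ x ∂ρ) - ∫ x, φ x ∂σ ≤ W1 ρ σ :=
  le_ciSup (aux_bddAbove ρ σ) ⟨φ, hφ⟩

/-- Key per-fibre bound. -/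
lemma aux_key (ρ σ : Measure X) [IsProbabilityMeasure ρ] [IsProbabilityMeasure σ]
    (lam D : ℝ) (hlam0 : 0 ≤ lam) (hD : 0 ≤ D) (hW : W1 ρ σ ≤ D)
    (f : X → X) (hf : ∀ x y, dist (f x) (f y) ≤ lam * dist x y)
    {φ : X → ℝ} (hφ : LipschitzWith 1 φ) :
    (∫ x, φ (f x) ∂ρ) - ∫ x, φ (f x) ∂σ ≤ lam * D := by
  rcases hlam0.eq_or_lt with h0 | h0
  · -- lam = 0 : f is constant
    obtain ⟨x0⟩ := ‹Nonempty X›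
    have hconst : ∀ x, f x = f x0 := by
      intro x
      have := hf x x0
      rw [← h0, zero_mul] at this
      exact dist_le_zero.mp this
    have : ∀ x, φ (f x) = φ (f x0) := fun x => by rw [hconst x]
    simp only [this, integral_const, measure_univ, probReal_univ, ENNReal.toReal_one, smul_eq_mul, one_mul,
      sub_self, ← h0, zero_mul]
    exact le_refl _
  · set ψ : X → ℝ := fun x => lam⁻¹ * φ (f x) with hψdef
    have hψ : LipschitzWith 1 ψ := by
      apply LipschitzWith.of_dist_le_mul
      intro x y
      have h1 : dist (φ (f x)) (φ (f y)) ≤ lam * dist x y :=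
        le_trans (by simpa using hφ.dist_le_mul (f x) (f y)) (hf x y)
      calc dist (ψ x) (ψ y) = |lam⁻¹| * dist (φ (f x)) (φ (f y)) := by
            simp [hψdef, Real.dist_eq, ← abs_mul, mul_sub]
            rw [← abs_inv, ← abs_mul, mul_sub]
        _ = lam⁻¹ * dist (φ (f x)) (φ (f y)) := by rw [abs_of_nonneg (by positivity)]
        _ ≤ lam⁻¹ * (lam * dist x y) := by
            apply mul_le_mul_of_nonneg_left h1 (by positivity)
        _ = 1 * dist x y := by field_simp
    have hle : (∫ x, ψ x ∂ρ) - ∫ x, ψ x ∂σ ≤ D := le_trans (aux_le_W1 ρ σ hψ) hW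
    have hcont : Continuous fun x => φ (f x) := by
      have hfc : Continuous f := by
        apply LipschitzWith.continuous (K := lam.toNNReal)
        apply LipschitzWith.of_dist_le_mul
        intro x y
        simpa [Real.coe_toNNReal lam hlam0] using hf x y
      exact hφ.continuous.comp hfc
    have hρψ : ∫ x, ψ x ∂ρ = lam⁻¹ * ∫ x, φ (f x) ∂ρ := integral_const_mul _ _
    have hσψ : ∫ x, ψ x ∂σ = lam⁻¹ * ∫ x, φ (f x) ∂σ := integral_const_mul _ _
    rw [hρψ, hσψ, ← mul_sub] at hle
    calc (∫ x, φ (f x) ∂ρ) - ∫ x, φ (f x) ∂σ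
        = lam * (lam⁻¹ * ((∫ x, φ (f x) ∂ρ) - ∫ x, φ (f x) ∂σ)) := by field_simp
      _ ≤ lam * D := mul_le_mul_of_nonneg_left hle hlam0

end Aux

theorem sectionalTransfer_contraction
    {Ω X I : Type*} [MetricSpace X] [CompactSpace X] [Nonempty X]
    [MeasurableSpace X] [BorelSpace X] [Countable I]
    (θ : I → Ω → Ω) (p : I → Ω → ℝ)
    (hp0 : ∀ i ω, 0 ≤ p i ω) (hp1 : ∀ ω, ∑' i, p i ω = 1)
    (lam : ℝ) (hlam0 : 0 ≤ lam) (hlam1 : lam < 1)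
    (g : Ω → X → X)
    (hg : ∀ (ω : Ω) (x y : X), dist (g ω x) (g ω y) ≤ lam * dist x y)
    (μ ν : Ω → Measure X)
    (hμ : ∀ ω, IsProbabilityMeasure (μ ω)) (hν : ∀ ω, IsProbabilityMeasure (ν ω))
    (D : ℝ) (hD : 0 ≤ D)
    (hWD : ∀ ϑ : Ω, W1 (ν ϑ) (μ ϑ) ≤ D) :
    ∀ ω : Ω,
      W1 (sectionalTransfer θ p g ν ω) (sectionalTransfer θ p g μ ω) ≤ lam * D := by
  intro ω
  obtain ⟨x0⟩ := ‹Nonempty X›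
  -- summability of the weights
  have hs : Summable fun i => p i ω := by
    by_contra h
    have := hp1 ω
    rw [tsum_eq_zero_of_not_summable h] at this
    norm_num at this
  -- fibre maps are measurable
  have hgm : ∀ ϑ : Ω, Measurable (g ϑ) := by
    intro ϑ
    have : Continuous (g ϑ) := by
      apply LipschitzWith.continuous (K := lam.toNNReal)
      apply LipschitzWith.of_dist_le_mul
      intro x y
      simpa [Real.coe_toNNReal lam hlam0] using hg ϑ x y
    exact this.measurable
  -- sectional transfer preserves probability measures
  have hprob : ∀ (ρ : Ω → Measure X), (∀ ϑ, IsProbabilityMeasure (ρ ϑ)) →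
      IsProbabilityMeasure (sectionalTransfer θ p g ρ ω) := by
    intro ρ hρ
    constructor
    rw [sectionalTransfer, Measure.sum_apply _ MeasurableSet.univ]
    have : ∀ i : I, (ENNReal.ofReal (p i ω) • ((ρ (θ i ω)).map (g (θ i ω)))) Set.univ
        = ENNReal.ofReal (p i ω) := by
      intro i
      have : IsProbabilityMeasure ((ρ (θ i ω)).map (g (θ i ω))) :=
        Measure.isProbabilityMeasure_map (hgm _).aemeasurable
      simp [Measure.smul_apply, this.measure_univ]
    simp only [this]
    rw [← ENNReal.ofReal_tsum_of_nonneg (fun i => hp0 i ω) hs, hp1 ω]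
    simp
  have hprobν := hprob ν hν
  have hprobμ := hprob μ hμ
  -- integral formula
  have hint : ∀ (ρ : Ω → Measure X) (_ : ∀ ϑ, IsProbabilityMeasure (ρ ϑ))
      (φ : X → ℝ) (hφ : LipschitzWith 1 φ),
      ∫ x, φ x ∂(sectionalTransfer θ p g ρ ω)
        = ∑' i, p i ω * ∫ x, φ (g (θ i ω) x) ∂(ρ (θ i ω)) := by
    intro ρ hρ φ hφ
    haveI := hprob ρ hρ
    rw [sectionalTransfer]
    rw [integral_sum_measure]
    · congr 1
      funext i
      haveI := hρ (θ i ω)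
      rw [integral_smul_measure, ENNReal.toReal_ofReal (hp0 i ω), smul_eq_mul]
      congr 1
      exact integral_map (hgm _).aemeasurable hφ.continuous.aestronglyMeasurable
    · haveI : IsProbabilityMeasure
          (Measure.sum fun i => ENNReal.ofReal (p i ω) • ((ρ (θ i ω)).map (g (θ i ω)))) := by
        have := hprob ρ hρ
        rwa [sectionalTransfer] at this
      exact aux_integrable _ hφ.continuous
  -- sup over test functions
  haveI : Nonempty {φ : X → ℝ // LipschitzWith 1 φ} :=
    ⟨⟨fun _ => 0, by intro x y; simp⟩⟩
  apply ciSup_le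
  rintro ⟨φ, hφ⟩
  simp only
  rw [hint ν hν φ hφ, hint μ hμ φ hφ]
  -- summability of each tsum
  set C : ℝ := ‖φ x0‖ + Metric.diam (Set.univ : Set X) with hC
  have hbd : ∀ (ρ : Measure X) [IsProbabilityMeasure ρ] (ϑ : Ω),
      |∫ x, φ (g ϑ x) ∂ρ| ≤ C := by
    intro ρ _ ϑ
    have hb : ∀ x : X, ‖φ (g ϑ x)‖ ≤ C := by
      intro x
      calc ‖φ (g ϑ x)‖ ≤ ‖φ x0‖ + ‖φ (g ϑ x) - φ x0‖ := by
            simpa using norm_add_le (φ x0) (φ (g ϑ x) - φ x0)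
        _ ≤ ‖φ x0‖ + Metric.diam (Set.univ : Set X) := by
            gcongr
            calc ‖φ (g ϑ x) - φ x0‖ = dist (φ (g ϑ x)) (φ x0) := by rw [Real.dist_eq, Real.norm_eq_abs]
              _ ≤ 1 * dist (g ϑ x) x0 := hφ.dist_le_mul _ _
              _ ≤ Metric.diam (Set.univ : Set X) := by
                  rw [one_mul]
                  exact Metric.dist_le_diam_of_mem isCompact_univ.isBounded trivial trivial
    have := norm_integral_le_of_norm_le_const (μ := ρ)
      (f := fun x => φ (g ϑ x)) (C := C) (Filter.Eventually.of_forall hb)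
    simpa [Real.norm_eq_abs] using this
  have hsum : ∀ (ρ : Ω → Measure X), (∀ ϑ, IsProbabilityMeasure (ρ ϑ)) →
      Summable fun i => p i ω * ∫ x, φ (g (θ i ω) x) ∂(ρ (θ i ω)) := by
    intro ρ hρ
    apply Summable.of_abs
    apply Summable.of_nonneg_of_le (fun i => abs_nonneg _) _ (hs.mul_right C)
    intro i
    rw [abs_mul, abs_of_nonneg (hp0 i ω)]
    apply mul_le_mul_of_nonneg_left _ (hp0 i ω)
    haveI := hρ (θ i ω)
    exact hbd _ _
  have hsν := hsum ν hν
  have hsμ := hsum μ hμ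
  rw [← Summable.tsum_sub hsν hsμ]
  have hterm : ∀ i : I,
      p i ω * (∫ x, φ (g (θ i ω) x) ∂(ν (θ i ω))) - p i ω * (∫ x, φ (g (θ i ω) x) ∂(μ (θ i ω)))
        ≤ p i ω * (lam * D) := by
    intro i
    rw [← mul_sub]
    apply mul_le_mul_of_nonneg_left _ (hp0 i ω)
    haveI := hν (θ i ω)
    haveI := hμ (θ i ω)
    exact aux_key (ν (θ i ω)) (μ (θ i ω)) lam D hlam0 hD (hWD (θ i ω)) (g (θ i ω))
      (hg (θ i ω)) hφ
  calc (∑' i, (p i ω * (∫ x, φ (g (θ i ω) x) ∂(ν (θ i ω)))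
          - p i ω * (∫ x, φ (g (θ i ω) x) ∂(μ (θ i ω)))))
      ≤ ∑' i, p i ω * (lam * D) := Summable.tsum_le_tsum hterm (hsν.sub hsμ) (hs.mul_right _)
    _ = (∑' i, p i ω) * (lam * D) := hs.tsum_mul_right _
    _ = lam * D := by rw [hp1 ω, one_mul]
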